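/- Let H, K₁, K₂ be separable complex Hilbert spaces with unilateral shifts S_H, S_{K₁}, S_{K₂} on ℓ²(ℕ,H), ℓ²(ℕ,K₁), ℓ²(ℕ,K₂). Let T ∈ B(ℓ²(ℕ,H)) commute with S_H and suppose T = W₁ Y₁ = W₂ Y₂, where each Wᵢ : ℓ²(ℕ,Kᵢ) → ℓ²(ℕ,H) is an isometry with Wᵢ ∘ S_{Kᵢ} = S_H ∘ Wᵢ and each Yᵢ : ℓ²(ℕ,H) → ℓ²(ℕ,Kᵢ) has dense range and satisfies Yᵢ ∘ S_H = S_{Kᵢ} ∘ Yᵢ. Then U := W₂* W₁ : ℓ²(ℕ,K₁) → ℓ²(ℕ,K₂) is unitary, U ∘ S_{K₁} = S_{K₂} ∘ U, W₁ = W₂ ∘ U, and Y₂ = U ∘ Y₁. -/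

import Mathlib

noncomputable section

open scoped ENNReal InnerProductSpace

set_option linter.unusedSectionVars false

namespace Shift

variable (H : Type*) [NormedAddCommGroup H] [InnerProductSpace ℂ H]

/-- The underlying function of the unilateral shift: `(shiftFun x) 0 = 0`,
`(shiftFun x) (n+1) = x n`. -/
def shiftFun (x : ℕ → H) : ℕ → H
  | 0 => 0
  | n + 1 => x n

variable {H}

theorem memℓp_shiftFun {x : ℕ → H} (hx : Memℓp x 2) : Memℓp (shiftFun H x) 2 := by
  apply memℓp_gen
  have h2 : (0:ℝ) < (2 : ℝ≥0∞).toReal := by norm_num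
  have hs : Summable fun n : ℕ => ‖x n‖ ^ (2 : ℝ≥0∞).toReal := (memℓp_gen_iff h2).1 hx
  exact (summable_nat_add_iff 1).1 (by simpa [shiftFun] using hs)

theorem tsum_shiftFun (x : ℕ → H) (hx : Memℓp x 2) :
    (∑' n, ‖shiftFun H x n‖ ^ (2 : ℝ≥0∞).toReal) = ∑' n, ‖x n‖ ^ (2 : ℝ≥0∞).toReal := by
  have h2 : (0:ℝ) < (2 : ℝ≥0∞).toReal := by norm_num
  rw [Summable.tsum_eq_zero_add (memℓp_gen_iff h2 |>.1 (memℓp_shiftFun hx))]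
  simp [shiftFun]

variable (H)

/-- The unilateral shift as a linear isometry on `ℓ²(ℕ, H)`. -/
def shiftLi : lp (fun _ : ℕ => H) 2 →ₗᵢ[ℂ] lp (fun _ : ℕ => H) 2 where
  toFun x := ⟨shiftFun H x, memℓp_shiftFun (lp.memℓp x)⟩
  map_add' x y := by
    apply lp.ext
    funext n
    change shiftFun H (⇑(x + y)) n = shiftFun H x n + shiftFun H y n
    cases n <;> simp [shiftFun, lp.coeFn_add]
  map_smul' c x := by
    apply lp.ext
    funext n
    cases n <;> simp [shiftFun, lp.coeFn_smul]
  norm_map' x := by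
    have h2 : (0:ℝ) < (2 : ℝ≥0∞).toReal := by norm_num
    rw [lp.norm_eq_tsum_rpow h2, lp.norm_eq_tsum_rpow h2]
    congr 1
    exact tsum_shiftFun x (lp.memℓp x)

/-- The unilateral shift `S_H` on `ℓ²(ℕ, H)`, as a continuous linear map:
`(shift H x) 0 = 0` and `(shift H x) (n+1) = x n`. -/
def shift : lp (fun _ : ℕ => H) 2 →L[ℂ] lp (fun _ : ℕ => H) 2 :=
  (shiftLi H).toContinuousLinearMap

variable {H}

theorem range_subset_aux {E K K' : Type*} [NormedAddCommGroup E] [InnerProductSpace ℂ E]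
    [NormedAddCommGroup K] [InnerProductSpace ℂ K] [CompleteSpace K]
    [NormedAddCommGroup K'] [InnerProductSpace ℂ K'] [CompleteSpace K']
    (W : K →L[ℂ] E) (W' : K' →L[ℂ] E) (Y : E →L[ℂ] K) (Y' : E →L[ℂ] K')
    (hW' : Isometry W') (hY : DenseRange ⇑Y) (hfac : W.comp Y = W'.comp Y') :
    Set.range W ⊆ Set.range W' := by
  intro v hv
  obtain ⟨x, rfl⟩ := hv
  have hx : x ∈ closure (Set.range Y) := by
    rw [hY.closure_range]; trivial
  have h1 : W x ∈ closure (W '' Set.range Y) :=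
    image_closure_subset_closure_image W.continuous (Set.mem_image_of_mem _ hx)
  have h2 : W '' Set.range Y ⊆ Set.range W' := by
    rintro _ ⟨_, ⟨u, rfl⟩, rfl⟩
    refine ⟨Y' u, ?_⟩
    have := congrArg (fun f => f u) hfac
    simpa using this.symm
  have h3 : closure (W '' Set.range Y) ⊆ Set.range W' :=
    closure_minimal h2 hW'.isClosedEmbedding.isClosed_range
  exact h3 h1

/-- uniqueness of the inner-outer factorization of an operator commuting
with the shift: if `T = W₁ Y₁ = W₂ Y₂` with `Wᵢ` inner and `Yᵢ` outer, then `U = W₂* W₁`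
is unitary, intertwines the shifts, `W₁ = W₂ U` and `Y₂ = U Y₁`. -/
theorem inner_outer_factorization_of_commutant_unique
    {H K₁ K₂ : Type*} [NormedAddCommGroup H] [InnerProductSpace ℂ H] [CompleteSpace H]
    [TopologicalSpace.SeparableSpace H]
    [NormedAddCommGroup K₁] [InnerProductSpace ℂ K₁] [CompleteSpace K₁]
    [TopologicalSpace.SeparableSpace K₁]
    [NormedAddCommGroup K₂] [InnerProductSpace ℂ K₂] [CompleteSpace K₂]
    [TopologicalSpace.SeparableSpace K₂]
    (T : lp (fun _ : ℕ => H) 2 →L[ℂ] lp (fun _ : ℕ => H) 2)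
    (hT : T.comp (shift H) = (shift H).comp T)
    (W₁ : lp (fun _ : ℕ => K₁) 2 →L[ℂ] lp (fun _ : ℕ => H) 2)
    (W₂ : lp (fun _ : ℕ => K₂) 2 →L[ℂ] lp (fun _ : ℕ => H) 2)
    (Y₁ : lp (fun _ : ℕ => H) 2 →L[ℂ] lp (fun _ : ℕ => K₁) 2)
    (Y₂ : lp (fun _ : ℕ => H) 2 →L[ℂ] lp (fun _ : ℕ => K₂) 2)
    (hW₁ : Isometry W₁) (hW₂ : Isometry W₂)
    (hW₁S : W₁.comp (shift K₁) = (shift H).comp W₁)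
    (hW₂S : W₂.comp (shift K₂) = (shift H).comp W₂)
    (hY₁ : DenseRange ⇑Y₁) (hY₂ : DenseRange ⇑Y₂)
    (hY₁S : Y₁.comp (shift H) = (shift K₁).comp Y₁)
    (hY₂S : Y₂.comp (shift H) = (shift K₂).comp Y₂)
    (hfac₁ : T = W₁.comp Y₁) (hfac₂ : T = W₂.comp Y₂) :
    Isometry ((ContinuousLinearMap.adjoint W₂).comp W₁) ∧
    Function.Surjective ⇑((ContinuousLinearMap.adjoint W₂).comp W₁) ∧
    ((ContinuousLinearMap.adjoint W₂).comp W₁).comp (shift K₁) =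
      (shift K₂).comp ((ContinuousLinearMap.adjoint W₂).comp W₁) ∧
    W₁ = W₂.comp ((ContinuousLinearMap.adjoint W₂).comp W₁) ∧
    Y₂ = ((ContinuousLinearMap.adjoint W₂).comp W₁).comp Y₁ := by
  classical
  set E := lp (fun _ : ℕ => H) 2
  -- norm preservation
  have hn₁ : ∀ x, ‖W₁ x‖ = ‖x‖ := fun x => hW₁.norm_map_of_map_zero (map_zero _) x
  have hn₂ : ∀ x, ‖W₂ x‖ = ‖x‖ := fun x => hW₂.norm_map_of_map_zero (map_zero _) x
  -- inner preservation for W₂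
  have hinner₂ : ∀ x y, ⟪W₂ x, W₂ y⟫_ℂ = ⟪x, y⟫_ℂ := fun x y =>
    LinearIsometry.inner_map_map (⟨W₂.toLinearMap, hn₂⟩ : lp (fun _ : ℕ => K₂) 2 →ₗᵢ[ℂ] E) x y
  -- W₂* W₂ = id
  have hadj : ∀ y, (ContinuousLinearMap.adjoint W₂) (W₂ y) = y := by
    intro y
    apply ext_inner_right ℂ
    intro z
    rw [ContinuousLinearMap.adjoint_inner_left]
    exact hinner₂ y z
  -- range inclusions
  have h12 : Set.range W₁ ⊆ Set.range W₂ :=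
    range_subset_aux W₁ W₂ Y₁ Y₂ hW₂ hY₁ (hfac₁.symm.trans hfac₂)
  have h21 : Set.range W₂ ⊆ Set.range W₁ :=
    range_subset_aux W₂ W₁ Y₂ Y₁ hW₁ hY₂ (hfac₂.symm.trans hfac₁)
  set U := (ContinuousLinearMap.adjoint W₂).comp W₁ with hU
  -- W₂ ∘ U = W₁ pointwise
  have hWU : ∀ x, W₂ (U x) = W₁ x := by
    intro x
    obtain ⟨y, hy⟩ := h12 ⟨x, rfl⟩
    have : U x = y := by
      simp only [hU, ContinuousLinearMap.comp_apply, ← hy, hadj]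
    rw [this, hy]
  have hW₂inj : Function.Injective ⇑W₂ := hW₂.injective
  have hUn : ∀ x, ‖U x‖ = ‖x‖ := by
    intro x
    rw [← hn₂ (U x), hWU, hn₁]
  refine ⟨AddMonoidHomClass.isometry_of_norm U hUn, ?_, ?_, ?_, ?_⟩
  · intro z
    obtain ⟨x, hx⟩ := h21 ⟨z, rfl⟩
    refine ⟨x, ?_⟩
    simp only [hU, ContinuousLinearMap.comp_apply, hx, hadj]
  · refine ContinuousLinearMap.ext fun x => ?_
    apply hW₂inj
    simp only [ContinuousLinearMap.comp_apply]
    rw [hWU]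
    have h1 : W₁ ((shift K₁) x) = (shift H) (W₁ x) := congrArg (fun f => f x) hW₁S
    have h2 : W₂ ((shift K₂) (U x)) = (shift H) (W₂ (U x)) :=
      congrArg (fun f => f (U x)) hW₂S
    rw [h1, h2, hWU]
  · refine ContinuousLinearMap.ext fun x => ?_
    simp only [ContinuousLinearMap.comp_apply]
    exact (hWU x).symm
  · refine ContinuousLinearMap.ext fun v => ?_
    apply hW₂inj
    simp only [ContinuousLinearMap.comp_apply]
    rw [hWU]
    have h1 : W₂ (Y₂ v) = T v := by rw [hfac₂]; rfl
    have h2 : W₁ (Y₁ v) = T v := by rw [hfac₁]; rfl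
    rw [h1, h2]


end Shift
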